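/- arXiv:2105.13833 — 3 statements merged into one kernel-verified Lean document; each statement's English description precedes it below -/
import Mathlib

section
/- Let x₀ ∈ ℝ^{n+1} and r > 0, and suppose the sphere S(x₀; r) and the sphere S(x̃₀; r̃) intersect at a point x. Let z = (1/r)Ψ(x₀) + (r/2)w and z̃ = (1/r̃)Ψ(x̃₀) + (r̃/2)w be their associated spacelike vectors. Then ⟨z, z̃⟩ equals the Euclidean inner product of the inward unit normals N(x) = (x₀ − x)/r and Ñ(x) = (x̃₀ − x)/r̃ of the two spheres at x. -/
open scoped RealInnerProductSpace

theorem stmt3 {n : ℕ} {L : Type*} [AddCommGroup L] [Module ℝ L]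
    (B : LinearMap.BilinForm ℝ L) (hsymm : ∀ a b : L, B a b = B b a)
    (v w : L) (hww : B w w = 0) (hvv : B v v = 0) (hvw : B v w = 1)
    (C : EuclideanSpace ℝ (Fin (n + 1)) →ₗ[ℝ] L)
    (hC : ∀ x y, B (C x) (C y) = ⟪x, y⟫)
    (hCv : ∀ x, B (C x) v = 0) (hCw : ∀ x, B (C x) w = 0)
    (Ψ : EuclideanSpace ℝ (Fin (n + 1)) → L)
    (hΨ : ∀ x, Ψ x = v + C x - ((1 / 2) * ‖x‖ ^ 2) • w)
    (x₀ x₀' x : EuclideanSpace ℝ (Fin (n + 1))) (r r' : ℝ)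
    (hr : 0 < r) (hr' : 0 < r')
    (hx : ‖x - x₀‖ = r) (hx' : ‖x - x₀'‖ = r')
    (z z' : L)
    (hz : z = (1 / r) • Ψ x₀ + (r / 2) • w)
    (hz' : z' = (1 / r') • Ψ x₀' + (r' / 2) • w) :
    B z z' = ⟪(1 / r) • (x₀ - x), (1 / r') • (x₀' - x)⟫ := by
  have hwv : B w v = 1 := by rw [hsymm]; exact hvw
  have hvC : ∀ y, B v (C y) = 0 := fun y => by rw [hsymm]; exact hCv y
  have hwC : ∀ y, B w (C y) = 0 := fun y => by rw [hsymm]; exact hCw y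
  have e1 : ‖x‖^2 - 2*⟪x, x₀⟫ + ‖x₀‖^2 = r^2 := by
    have := norm_sub_sq_real x x₀
    nlinarith [this, hx]
  have e2 : ‖x‖^2 - 2*⟪x, x₀'⟫ + ‖x₀'‖^2 = r'^2 := by
    have := norm_sub_sq_real x x₀'
    nlinarith [this, hx']
  subst hz hz'
  simp only [hΨ, map_add, map_sub, map_smul, LinearMap.add_apply, LinearMap.sub_apply,
    LinearMap.smul_apply, smul_eq_mul, hC, hCv, hCw, hvv, hww, hvw, hwv, hvC, hwC,
    real_inner_smul_left, real_inner_smul_right, inner_sub_left, inner_sub_right]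
  rw [real_inner_comm x x₀, real_inner_self_eq_norm_sq]
  simp only [PiLp.inner_apply, RCLike.inner_apply, conj_trivial] at e1 e2 ⊢
  have hrne : r ≠ 0 := ne_of_gt hr
  have hrne' : r' ≠ 0 := ne_of_gt hr'
  field_simp
  linear_combination (-2) * e1 + (-2) * e2
end

section
/- With notation as above, let g be the Riemannian metric on ℝ^{n+1} ∖ ℝ^{k−1} given by g(x)(u₁, u₂) = ‖x^⊥‖^{−2} ⟨u₁, u₂⟩, where ⟨·,·⟩ is the Euclidean inner product. Let x₀ ∈ ℝ^{k−1}, r > 0, and let I(x) = x₀ + r²(x − x₀)/‖x − x₀‖² be the inversion in the sphere S(x₀; r). Then I is an isometry of (ℝ^{n+1} ∖ ℝ^{k−1}, g): for every x ∈ ℝ^{n+1} ∖ ℝ^{k−1} and all u₁, u₂ ∈ ℝ^{n+1}, g(I(x))(dI_x(u₁), dI_x(u₂)) = g(x)(u₁, u₂). -/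
open scoped RealInnerProductSpace

/-- The component of `x` in `ℝ^{n-k+2} = (ℝ^{k-1})^⊥`. -/
def perpPart (n k : ℕ) (x : EuclideanSpace ℝ (Fin (n + 1))) :
    EuclideanSpace ℝ (Fin (n + 1)) :=
  WithLp.toLp 2 (fun i : Fin (n + 1) => if (i : ℕ) < k - 1 then 0 else x i)

lemma perpPart_sub (n k : ℕ) (x y : EuclideanSpace ℝ (Fin (n + 1))) :
    perpPart n k (x - y) = perpPart n k x - perpPart n k y := by
  ext i
  simp only [perpPart, PiLp.sub_apply, PiLp.toLp_apply]
  split <;> simp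

lemma perpPart_smul (n k : ℕ) (c : ℝ) (x : EuclideanSpace ℝ (Fin (n + 1))) :
    perpPart n k (c • x) = c • perpPart n k x := by
  ext i
  simp only [perpPart, PiLp.smul_apply, smul_eq_mul, PiLp.toLp_apply]
  split <;> simp

lemma perpPart_add (n k : ℕ) (x y : EuclideanSpace ℝ (Fin (n + 1))) :
    perpPart n k (x + y) = perpPart n k x + perpPart n k y := by
  ext i
  simp only [perpPart, PiLp.add_apply, PiLp.toLp_apply]
  split <;> simp

theorem stmt13 {n k : ℕ} (hk : 1 ≤ k)
    (x₀ : EuclideanSpace ℝ (Fin (n + 1))) (hx₀ : perpPart n k x₀ = 0)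
    (r : ℝ) (hr : 0 < r)
    (I : EuclideanSpace ℝ (Fin (n + 1)) → EuclideanSpace ℝ (Fin (n + 1)))
    (hI : ∀ x, I x = x₀ + (r ^ 2 / ‖x - x₀‖ ^ 2) • (x - x₀)) :
    ∀ x : EuclideanSpace ℝ (Fin (n + 1)), perpPart n k x ≠ 0 →
      ∀ u₁ u₂ : EuclideanSpace ℝ (Fin (n + 1)),
        (‖perpPart n k (I x)‖ ^ 2)⁻¹ * ⟪fderiv ℝ I x u₁, fderiv ℝ I x u₂⟫ =
          (‖perpPart n k x‖ ^ 2)⁻¹ * ⟪u₁, u₂⟫ := by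
  intro x hx u₁ u₂
  have hxne : x ≠ x₀ := by
    rintro rfl; exact hx hx₀
  -- I equals the Euclidean inversion
  have hIeq : I = EuclideanGeometry.inversion x₀ r := by
    funext y
    rw [hI, EuclideanGeometry.inversion]
    simp only [vsub_eq_sub, vadd_eq_add, dist_eq_norm, div_pow]
    abel
  set s : ℝ := (r / dist x x₀) ^ 2 with hs
  have hsx : s = r ^ 2 / ‖x - x₀‖ ^ 2 := by
    rw [hs, dist_eq_norm, div_pow]
  have hdpos : (0:ℝ) < dist x x₀ := dist_pos.2 hxne
  have hspos : 0 < s := by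
    rw [hs]
    positivity
  -- the derivative
  have hder := EuclideanGeometry.hasFDerivAt_inversion (c := x₀) (R := r) hxne
  have hfd : fderiv ℝ I x = s • (Submodule.reflection (ℝ ∙ (x - x₀))ᗮ :
      EuclideanSpace ℝ (Fin (n + 1)) →L[ℝ] EuclideanSpace ℝ (Fin (n + 1))) := by
    rw [hIeq]
    exact hder.fderiv
  -- inner product identity
  have hinner : ⟪fderiv ℝ I x u₁, fderiv ℝ I x u₂⟫ = s ^ 2 * ⟪u₁, u₂⟫ := by
    rw [hfd]
    simp only [ContinuousLinearMap.smul_apply, real_inner_smul_left, real_inner_smul_right,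
      ContinuousLinearMap.coe_coe, LinearIsometryEquiv.coe_coe,
      LinearIsometryEquiv.coe_toContinuousLinearEquiv]
    erw [(Submodule.reflection (ℝ ∙ (x - x₀))ᗮ).inner_map_map]
    ring
  -- perp part of I x
  have hperp : perpPart n k (I x) = s • perpPart n k x := by
    rw [hI x, perpPart_add, hx₀, perpPart_smul, perpPart_sub, hx₀, sub_zero, hsx]
    simp
  have hnx : ‖perpPart n k x‖ ≠ 0 := norm_ne_zero_iff.2 hx
  rw [hinner, hperp, norm_smul, mul_pow, Real.norm_eq_abs, sq_abs]
  have : s ^ 2 ≠ 0 := by positivity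
  field_simp
end

section
/- Fix x₀ ∈ ℝ^{n+1} ∖ ℝ^{k−1} and let f : S(x₀; r) → ℝ^{n+1} be the inclusion of the sphere of center x₀ and radius r, with inward unit normal N(x) = (x₀ − x)/r and mean curvature vector H(x) = (1/r) N(x). Then the identity H(x) = −(x^⊥)_N / ‖x^⊥‖² for all x ∈ S(x₀; r) — where (x^⊥)_N = ⟨x^⊥, N(x)⟩ N(x) is the normal component of x^⊥ — holds if and only if x₀^⊥ = 0, i.e. x₀ ∈ ℝ^{k−1}. -/
open scoped RealInnerProductSpace

lemma perpPart_idem (n k : ℕ) (x : EuclideanSpace ℝ (Fin (n + 1))) :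
    perpPart n k (perpPart n k x) = perpPart n k x := by
  ext i
  simp only [perpPart, PiLp.toLp_apply]
  split <;> simp [*]

lemma inner_perpPart (n k : ℕ) (x y : EuclideanSpace ℝ (Fin (n + 1))) :
    ⟪perpPart n k x, y⟫ = ⟪perpPart n k x, perpPart n k y⟫ := by
  simp only [PiLp.inner_apply, RCLike.inner_apply, conj_trivial, perpPart, PiLp.toLp_apply]
  apply Finset.sum_congr rfl
  intro i _
  split <;> simp

theorem stmt16 {n k : ℕ} (hk : 1 ≤ k)
    (x₀ : EuclideanSpace ℝ (Fin (n + 1))) (r : ℝ) (hr : 0 < r)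
    (N : EuclideanSpace ℝ (Fin (n + 1)) → EuclideanSpace ℝ (Fin (n + 1)))
    (hN : ∀ x, N x = (1 / r) • (x₀ - x)) :
    (∀ x : EuclideanSpace ℝ (Fin (n + 1)), ‖x - x₀‖ = r → perpPart n k x ≠ 0 →
        (1 / r) • N x =
          -((‖perpPart n k x‖ ^ 2)⁻¹ • (⟪perpPart n k x, N x⟫ • N x))) ↔
      perpPart n k x₀ = 0 := by
  constructor
  · intro h
    by_contra hv
    set v := perpPart n k x₀ with hvdef
    have hvn : 0 < ‖v‖ := norm_pos_iff.mpr hv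
    set t : ℝ := r / ‖v‖ with htdef
    have ht : 0 < t := div_pos hr hvn
    set x : EuclideanSpace ℝ (Fin (n + 1)) := x₀ + t • v with hxdef
    have hxperp : perpPart n k x = (1 + t) • v := by
      rw [hxdef, perpPart_add, perpPart_smul, ← hvdef, perpPart_idem, ← hvdef, add_smul, one_smul]
    have hxr : ‖x - x₀‖ = r := by
      rw [hxdef]
      simp only [add_sub_cancel_left, norm_smul, Real.norm_eq_abs, abs_of_pos ht]
      field_simp [htdef]
      exact div_mul_cancel₀ r hvn.ne'
    have hxne : perpPart n k x ≠ 0 := by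
      rw [hxperp]
      exact smul_ne_zero (by positivity) hv
    have hNx : N x = (-(t / r)) • v := by
      rw [hN, hxdef]
      rw [show x₀ - (x₀ + t • v) = -(t • v) by abel]
      rw [smul_neg, smul_smul]
      rw [neg_smul]
      ring_nf
    have key := h x hxr hxne
    rw [hNx, hxperp] at key
    have hinner : ⟪(1 + t) • v, (-(t / r)) • v⟫ = (1 + t) * (-(t / r)) * ‖v‖ ^ 2 := by
      rw [real_inner_smul_left, real_inner_smul_right, real_inner_self_eq_norm_sq]
      ring
    rw [hinner] at key
    have hnorm : ‖(1 + t) • v‖ ^ 2 = (1 + t) ^ 2 * ‖v‖ ^ 2 := by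
      rw [norm_smul, Real.norm_eq_abs, mul_pow, sq_abs]
    rw [hnorm] at key
    -- both sides are scalar multiples of v
    rw [smul_smul, smul_smul, smul_smul, ← neg_smul] at key
    have hsc := smul_left_injective ℝ hv key
    have h1t : (0:ℝ) < 1 + t := by linarith
    have hvne : ‖v‖ ^ 2 ≠ 0 := by positivity
    field_simp at hsc
    have hpos : 0 < t * (1 + t) * ‖v‖ ^ 2 * (r * r) := by positivity
    nlinarith [hsc, hpos]
  · intro h0 x hx hxp
    have hinner : ⟪perpPart n k x, N x⟫ = -(1 / r) * ‖perpPart n k x‖ ^ 2 := by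
      rw [hN, real_inner_smul_right, inner_perpPart, perpPart_sub, h0, zero_sub,
        inner_neg_right, inner_perpPart, perpPart_idem, real_inner_self_eq_norm_sq]
      ring
    have hA : ‖perpPart n k x‖ ^ 2 ≠ 0 := pow_ne_zero 2 (norm_ne_zero_iff.mpr hxp)
    rw [hinner, ← neg_smul, smul_smul,
      show -(‖perpPart n k x‖ ^ 2)⁻¹ * (-(1 / r) * ‖perpPart n k x‖ ^ 2) = 1 / r by
        field_simp]
end
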